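/- Let m ≥ 1 and f = x·((xz)^m + y^{2m}) in C[x,y,z], a polynomial of degree d = 2m + 1. Then for every integer j with 0 ≤ j ≤ d − 3, if (a,b,c) ∈ AR(f)_j satisfies a_x + b_y + c_z = 0, then (a,b,c) = (0,0,0). -/

import Mathlib

open MvPolynomial

namespace Stmt16Aux

lemma deg3 (s : Fin 3 →₀ ℕ) : (Finsupp.weight (1 : Fin 3 → ℕ)) s = s 0 + s 1 + s 2 := by
  rw [show (Finsupp.weight (1 : Fin 3 → ℕ)) s = ∑ i ∈ s.support, s i by
    simp [Finsupp.weight_apply, Finsupp.sum]]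
  rw [Finset.sum_subset (Finset.subset_univ s.support)
    (by intro i _ h; simpa using Finsupp.notMem_support_iff.mp h)]
  simp [Fin.sum_univ_three]

lemma hom_coeff_sum {p : MvPolynomial (Fin 3) ℂ} {j : ℕ} (hp : p.IsHomogeneous j)
    {s : Fin 3 →₀ ℕ} (hs : p.coeff s ≠ 0) : s 0 + s 1 + s 2 = j := by
  have := hp hs
  rwa [deg3] at this

lemma mono_dvd {u : Fin 3 →₀ ℕ} {p : MvPolynomial (Fin 3) ℂ}
    (h : ∀ s, p.coeff s ≠ 0 → u ≤ s) : (monomial u (1:ℂ)) ∣ p := by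
  rw [MvPolynomial.monomial_one_dvd_iff_modMonomial_eq_zero, MvPolynomial.eq_zero_iff]
  intro s
  by_cases hle : u ≤ s
  · exact MvPolynomial.coeff_modMonomial_of_le _ hle
  · rw [MvPolynomial.coeff_modMonomial_of_not_le _ hle]
    by_contra hc
    exact hle (h s hc)

lemma natCast_C (k : ℕ) : ((k : ℕ) : MvPolynomial (Fin 3) ℂ) = C (k : ℂ) :=
  (map_natCast (C : ℂ →+* MvPolynomial (Fin 3) ℂ) k).symm

lemma coeff_natCast_mul (k : ℕ) (p : MvPolynomial (Fin 3) ℂ) (s : Fin 3 →₀ ℕ) :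
    coeff s ((k : MvPolynomial (Fin 3) ℂ) * p) = (k : ℂ) * coeff s p := by
  rw [natCast_C, coeff_C_mul]

lemma pderiv_natCast_mul (i : Fin 3) (k : ℕ) (p : MvPolynomial (Fin 3) ℂ) :
    pderiv i ((k : MvPolynomial (Fin 3) ℂ) * p) = (k : MvPolynomial (Fin 3) ℂ) * pderiv i p := by
  rw [natCast_C, pderiv_mul, pderiv_C, zero_mul, zero_add]

lemma coeff_X_mul_pderiv (i : Fin 3) (p : MvPolynomial (Fin 3) ℂ) (s : Fin 3 →₀ ℕ) :
    coeff s (X i * pderiv i p) = (s i : ℂ) * coeff s p := by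
  induction p using MvPolynomial.induction_on' with
  | add p q hp hq => rw [map_add, mul_add, coeff_add, coeff_add, hp, hq]; ring
  | monomial u a =>
    rw [pderiv_monomial, X, monomial_mul, one_mul]
    by_cases hui : u i = 0
    · have h1 : u - Finsupp.single i 1 = u := by
        ext j
        rcases eq_or_ne j i with rfl | hj
        · simp [Finsupp.tsub_apply, Finsupp.single_apply, hui]
        · simp [Finsupp.tsub_apply, Finsupp.single_apply, Ne.symm hj]
      rw [h1, hui, Nat.cast_zero, mul_zero]
      rw [(monomial _).map_zero]  -- monomial _ 0 = 0
      rw [coeff_zero, coeff_monomial]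
      split_ifs with h
      · subst h; simp [hui]
      · ring
    · have h1 : Finsupp.single i 1 + (u - Finsupp.single i 1) = u := by
        ext j
        rcases eq_or_ne j i with rfl | hj
        · simp only [Finsupp.coe_add, Pi.add_apply, Finsupp.tsub_apply, Finsupp.single_apply,
            if_pos rfl, eq_self_iff_true, if_true]
          omega
        · simp [Finsupp.single_apply, Ne.symm hj]
      rw [h1, coeff_monomial, coeff_monomial]
      split_ifs with h
      · subst h; ring
      · ring

end Stmt16Aux

open Stmt16Aux

/-- The Jacobian map sending a triple `(a,b,c)` to `a·f_x + b·f_y + c·f_z`. -/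
noncomputable def jacMap (f : MvPolynomial (Fin 3) ℂ) :
    (Fin 3 → MvPolynomial (Fin 3) ℂ) →ₗ[MvPolynomial (Fin 3) ℂ] MvPolynomial (Fin 3) ℂ where
  toFun v := ∑ i, v i * pderiv i f
  map_add' a b := by simp [add_mul, Finset.sum_add_distrib]
  map_smul' c a := by simp [Finset.mul_sum, mul_assoc]

/-- The module of Jacobian syzygies `AR(f)`. -/
noncomputable def AR (f : MvPolynomial (Fin 3) ℂ) :
    Submodule (MvPolynomial (Fin 3) ℂ) (Fin 3 → MvPolynomial (Fin 3) ℂ) :=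
  LinearMap.ker (jacMap f)

set_option maxHeartbeats 1000000 in
theorem stmt16 (m d : ℕ) (hm : 1 ≤ m) (hd : d = 2 * m + 1) :
    let f : MvPolynomial (Fin 3) ℂ := X 0 * ((X 0 * X 2) ^ m + X 1 ^ (2 * m))
    ∀ j : ℕ, j ≤ d - 3 → ∀ v : Fin 3 → MvPolynomial (Fin 3) ℂ,
      v ∈ AR f → (∀ i, (v i).IsHomogeneous j) → (∑ i, pderiv i (v i)) = 0 → v = 0 := by
  intro f j hj v hv hhom hdiv
  obtain ⟨n, rfl⟩ : ∃ n, m = n + 1 := ⟨m - 1, by omega⟩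
  have hj' : j ≤ 2 * n := by omega
  have hf : f = X 0 * ((X 0 * X 2) ^ (n + 1) + X 1 ^ (2 * n + 2)) := by
    show X 0 * ((X 0 * X 2) ^ (n + 1) + X 1 ^ (2 * (n + 1))) = _
    norm_num [show 2 * (n + 1) = 2 * n + 2 by ring]
  -- the syzygy equation
  rw [AR, LinearMap.mem_ker] at hv
  have H : v 0 * pderiv 0 f + v 1 * pderiv 1 f + v 2 * pderiv 2 f = 0 := by
    have : (∑ i, v i * pderiv i f) = 0 := hv
    rwa [Fin.sum_univ_three] at this
  -- computing the partial derivatives of f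
  have hfx : pderiv 0 f =
      ((n:MvPolynomial (Fin 3) ℂ) + 2) * (X 0 ^ (n+1) * X 2 ^ (n+1)) + X 1 ^ (2*n+2) := by
    rw [hf]
    simp only [pderiv_mul, pderiv_pow, pderiv_X_self, map_add, Nat.add_sub_cancel,
      pderiv_X_of_ne (show (2:Fin 3) ≠ 0 by decide),
      pderiv_X_of_ne (show (1:Fin 3) ≠ 0 by decide)]
    push_cast
    ring
  have hfy : pderiv 1 f =
      (2*(n:MvPolynomial (Fin 3) ℂ) + 2) * (X 0 * X 1 ^ (2*n+1)) := by
    rw [hf]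
    simp only [pderiv_mul, pderiv_pow, pderiv_X_self, map_add, Nat.add_sub_cancel,
      pderiv_X_of_ne (show (2:Fin 3) ≠ 1 by decide),
      pderiv_X_of_ne (show (0:Fin 3) ≠ 1 by decide)]
    push_cast
    ring
  have hfz : pderiv 2 f =
      ((n:MvPolynomial (Fin 3) ℂ) + 1) * (X 0 ^ (n+2) * X 2 ^ n) := by
    rw [hf]
    simp only [pderiv_mul, pderiv_pow, pderiv_X_self, map_add, Nat.add_sub_cancel,
      pderiv_X_of_ne (show (0:Fin 3) ≠ 2 by decide),
      pderiv_X_of_ne (show (1:Fin 3) ≠ 2 by decide)]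
    push_cast
    ring
  rw [hfx, hfy, hfz] at H
  -- Step A : X 0 divides v 0
  have hkey : v 0 * X 1 ^ (2*n+2) = X 0 *
      (-(((n:MvPolynomial (Fin 3) ℂ)+2) * v 0 * (X 0 ^ n * X 2 ^ (n+1))
        + (2*(n:MvPolynomial (Fin 3) ℂ)+2) * v 1 * X 1 ^ (2*n+1)
        + ((n:MvPolynomial (Fin 3) ℂ)+1) * v 2 * (X 0 ^ (n+1) * X 2 ^ n))) := by
    linear_combination H
  have hstepA : ∀ s : Fin 3 →₀ ℕ, (v 0).coeff s ≠ 0 → 1 ≤ s 0 := by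
    intro s hs
    by_contra hlt
    have hs0 : s 0 = 0 := by omega
    have h2 : coeff (s + Finsupp.single 1 (2*n+2)) (v 0 * X 1 ^ (2*n+2)) = coeff s (v 0) := by
      rw [X_pow_eq_monomial, coeff_mul_monomial, mul_one]
    rw [hkey, coeff_X_mul'] at h2
    rw [if_neg (by
      simp [Finsupp.mem_support_iff, Finsupp.add_apply, Finsupp.single_apply, hs0])] at h2
    exact hs h2.symm
  obtain ⟨A, hA⟩ : X 0 ∣ v 0 := by
    have hXmon : (X 0 : MvPolynomial (Fin 3) ℂ) = monomial (Finsupp.single 0 1) 1 := by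
      rw [← X_pow_eq_monomial, pow_one]
    rw [hXmon]
    exact mono_dvd (fun s hs => Finsupp.single_le_iff.mpr (hstepA s hs))
  have hAco : ∀ s : Fin 3 →₀ ℕ, A.coeff s ≠ 0 → s 0 + s 1 + s 2 + 1 = j := by
    intro s hs
    have h2 : coeff (Finsupp.single 0 1 + s) (v 0) ≠ 0 := by
      rw [hA, coeff_X_mul]; exact hs
    have h3 := hom_coeff_sum (hhom 0) h2
    simp only [Finsupp.coe_add, Pi.add_apply, Finsupp.single_apply,
      if_pos rfl, eq_self_iff_true, if_true, if_neg (show ¬(0:Fin 3) = 1 by decide),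
      if_neg (show ¬(0:Fin 3) = 2 by decide)] at h3
    omega
  -- cancel X 0 from the syzygy equation
  have hX0 : (X 0 : MvPolynomial (Fin 3) ℂ) ≠ 0 := X_ne_zero 0
  rw [hA] at H
  have Hin : ((n:MvPolynomial (Fin 3) ℂ)+2) * A * (X 0 ^ (n+1) * X 2 ^ (n+1))
      + A * X 1 ^ (2*n+2)
      + (2*(n:MvPolynomial (Fin 3) ℂ)+2) * v 1 * X 1 ^ (2*n+1)
      + ((n:MvPolynomial (Fin 3) ℂ)+1) * v 2 * (X 0 ^ (n+1) * X 2 ^ n) = 0 := by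
    apply mul_left_cancel₀ hX0
    rw [mul_zero]
    linear_combination H
  -- the auxiliary polynomial g
  set g : MvPolynomial (Fin 3) ℂ :=
    A * X 1 + (2*(n:MvPolynomial (Fin 3) ℂ)+2) * v 1 with hgdef
  have key2a : g * X 1 ^ (2*n+1) = X 0 ^ (n+1) *
      (-(((n:MvPolynomial (Fin 3) ℂ)+2) * A * X 2 ^ (n+1)
        + ((n:MvPolynomial (Fin 3) ℂ)+1) * v 2 * X 2 ^ n)) := by
    rw [hgdef]; linear_combination Hin
  have key2b : g * X 1 ^ (2*n+1) = X 2 ^ n *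
      (-(((n:MvPolynomial (Fin 3) ℂ)+2) * A * (X 0 ^ (n+1) * X 2)
        + ((n:MvPolynomial (Fin 3) ℂ)+1) * v 2 * X 0 ^ (n+1))) := by
    rw [hgdef]; linear_combination Hin
  have hg0 : ∀ s : Fin 3 →₀ ℕ, g.coeff s ≠ 0 → n + 1 ≤ s 0 := by
    intro s hs
    by_contra hlt
    have h2 : coeff (s + Finsupp.single 1 (2*n+1)) (g * X 1 ^ (2*n+1)) = coeff s g := by
      rw [X_pow_eq_monomial, coeff_mul_monomial, mul_one]
    rw [key2a, show (X 0 : MvPolynomial (Fin 3) ℂ) ^ (n+1)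
        = monomial (Finsupp.single 0 (n+1)) 1 from X_pow_eq_monomial,
      coeff_monomial_mul'] at h2
    rw [if_neg (by
      rw [Finsupp.single_le_iff]
      simp only [Finsupp.coe_add, Pi.add_apply, Finsupp.single_apply,
        if_neg (show ¬(1:Fin 3) = 0 by decide)]
      omega)] at h2
    exact hs h2.symm
  have hg2 : ∀ s : Fin 3 →₀ ℕ, g.coeff s ≠ 0 → n ≤ s 2 := by
    intro s hs
    by_contra hlt
    have h2 : coeff (s + Finsupp.single 1 (2*n+1)) (g * X 1 ^ (2*n+1)) = coeff s g := by
      rw [X_pow_eq_monomial, coeff_mul_monomial, mul_one]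
    rw [key2b, show (X 2 : MvPolynomial (Fin 3) ℂ) ^ n
        = monomial (Finsupp.single 2 n) 1 from X_pow_eq_monomial,
      coeff_monomial_mul'] at h2
    rw [if_neg (by
      rw [Finsupp.single_le_iff]
      simp only [Finsupp.coe_add, Pi.add_apply, Finsupp.single_apply,
        if_neg (show ¬(1:Fin 3) = 2 by decide)]
      omega)] at h2
    exact hs h2.symm
  have hgsum : ∀ s : Fin 3 →₀ ℕ, g.coeff s ≠ 0 → s 0 + s 1 + s 2 = j := by
    intro s hs
    rw [hgdef] at hs
    rw [coeff_add] at hs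
    by_cases h1 : coeff s (A * X 1) = 0
    · have h2 : coeff s ((2*(n:MvPolynomial (Fin 3) ℂ)+2) * v 1) ≠ 0 := by
        intro h; rw [h1, h] at hs; exact hs (add_zero 0)
      have h3 : coeff s (v 1) ≠ 0 := by
        intro h
        apply h2
        rw [show (2*(n:MvPolynomial (Fin 3) ℂ)+2) = ((2*n+2 : ℕ) : MvPolynomial (Fin 3) ℂ)
          by push_cast; ring]
        rw [coeff_natCast_mul, h, mul_zero]
      exact hom_coeff_sum (hhom 1) h3
    · rw [coeff_mul_X'] at h1
      by_cases hmem : (1 : Fin 3) ∈ s.support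
      · rw [if_pos hmem] at h1
        have h4 := hAco _ h1
        have h5 : s 1 ≠ 0 := Finsupp.mem_support_iff.mp hmem
        have e0 : ((s - Finsupp.single 1 1 : Fin 3 →₀ ℕ)) 0 = s 0 := by
          simp [Finsupp.tsub_apply, Finsupp.single_apply,
            if_neg (show ¬(1:Fin 3) = 0 by decide)]
        have e1 : ((s - Finsupp.single 1 1 : Fin 3 →₀ ℕ)) 1 = s 1 - 1 := by
          simp [Finsupp.tsub_apply, Finsupp.single_apply]
        have e2 : ((s - Finsupp.single 1 1 : Fin 3 →₀ ℕ)) 2 = s 2 := by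
          simp [Finsupp.tsub_apply, Finsupp.single_apply,
            if_neg (show ¬(1:Fin 3) = 2 by decide)]
        rw [e0, e1, e2] at h4
        omega
      · rw [if_neg hmem] at h1; exact absurd rfl h1
  have hgz : g = 0 := by
    rw [MvPolynomial.eq_zero_iff]
    intro s
    by_contra hs
    have h0 := hg0 s hs
    have h2 := hg2 s hs
    have h3 := hgsum s hs
    omega
  -- the two linear relations
  have Eq1 : A * X 1 + (2*(n:MvPolynomial (Fin 3) ℂ)+2) * v 1 = 0 := by
    rw [← hgdef]; exact hgz
  have Eq2 : ((n:MvPolynomial (Fin 3) ℂ)+2) * A * X 2 + ((n:MvPolynomial (Fin 3) ℂ)+1) * v 2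
      = 0 := by
    have h2 : (X 0 ^ (n+1) * X 2 ^ n) *
        (((n:MvPolynomial (Fin 3) ℂ)+2) * A * X 2 + ((n:MvPolynomial (Fin 3) ℂ)+1) * v 2)
        = 0 := by
      linear_combination Hin - X 1 ^ (2*n+1) * Eq1
    rcases mul_eq_zero.mp h2 with h3 | h3
    · exact absurd h3 (mul_ne_zero (pow_ne_zero _ hX0) (pow_ne_zero _ (X_ne_zero 2)))
    · exact h3
  -- divergence condition
  rw [Fin.sum_univ_three, hA] at hdiv
  rw [pderiv_mul, pderiv_X_self, one_mul] at hdiv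
  have Eq1' : A * X 1 + ((2*n+2 : ℕ) : MvPolynomial (Fin 3) ℂ) * v 1 = 0 := by
    push_cast
    linear_combination Eq1
  have e1 := congrArg (pderiv 1) Eq1'
  rw [map_add, map_zero, pderiv_natCast_mul, pderiv_mul, pderiv_X_self, mul_one] at e1
  have Eq2' : ((n+2 : ℕ) : MvPolynomial (Fin 3) ℂ) * (A * X 2)
      + ((n+1 : ℕ) : MvPolynomial (Fin 3) ℂ) * v 2 = 0 := by
    push_cast
    linear_combination Eq2
  have e2 := congrArg (pderiv 2) Eq2'
  rw [map_add, map_zero, pderiv_natCast_mul, pderiv_natCast_mul, pderiv_mul,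
    pderiv_X_self, mul_one] at e2
  -- the master identity
  have Hfin : (((2*n+2)*(n+1) : ℕ) : MvPolynomial (Fin 3) ℂ) * (A + X 0 * pderiv 0 A)
      = ((n+1 : ℕ) : MvPolynomial (Fin 3) ℂ) * (A + X 1 * pderiv 1 A)
      + (((2*n+2)*(n+2) : ℕ) : MvPolynomial (Fin 3) ℂ) * (A + X 2 * pderiv 2 A) := by
    linear_combination (norm := (push_cast; ring1))
      (((2*n+2)*(n+1) : ℕ) : MvPolynomial (Fin 3) ℂ) * hdiv
      - ((n+1 : ℕ) : MvPolynomial (Fin 3) ℂ) * e1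
      - ((2*n+2 : ℕ) : MvPolynomial (Fin 3) ℂ) * e2
  -- coefficientwise contradiction
  have hAz : A = 0 := by
    rw [MvPolynomial.eq_zero_iff]
    intro s
    by_contra hs
    have hsum := hAco s hs
    have h1 := congrArg (coeff s) Hfin
    simp only [coeff_add, coeff_natCast_mul, coeff_X_mul_pderiv] at h1
    have h2 : ((((2*n+2)*(n+1) : ℕ) : ℂ) * (1 + (s 0 : ℂ))) * coeff s A
        = (((n+1 : ℕ) : ℂ) * (1 + (s 1 : ℂ))
          + (((2*n+2)*(n+2) : ℕ) : ℂ) * (1 + (s 2 : ℂ))) * coeff s A := by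
      linear_combination h1
    have h3 := mul_right_cancel₀ hs h2
    have hN : (2*n+2)*(n+1) * (1 + s 0) = (n+1) * (1 + s 1) + (2*n+2)*(n+2) * (1 + s 2) := by
      exact_mod_cast h3
    -- pass to ℤ and cancel (n+1)
    have hne' : ((n:ℤ)+1) ≠ 0 := by positivity
    have h4 : ((n:ℤ)+1) * ((2*n+2) * (1 + (s 0 : ℤ)))
        = ((n:ℤ)+1) * ((1 + (s 1 : ℤ)) + 2*((n:ℤ)+2) * (1 + (s 2 : ℤ))) := by
      have := hN
      zify at this
      linear_combination this
    have h5 := mul_left_cancel₀ hne' h4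
    have hsum' : ((s 0 : ℤ)) + (s 1 : ℤ) + (s 2 : ℤ) + 1 = (j : ℤ) := by exact_mod_cast hsum
    have hT : (2*(n:ℤ)+3) * ((s 0 : ℤ) - (s 2 : ℤ)) = (j : ℤ) + 2 := by
      linear_combination h5 + hsum'
    have hj2 : (j : ℤ) + 2 ≤ 2*(n:ℤ) + 2 := by exact_mod_cast by omega
    rcases le_or_gt ((s 0 : ℤ) - (s 2 : ℤ)) 0 with hle | hgt
    · have hq : (2*(n:ℤ)+3) * ((s 0 : ℤ) - (s 2 : ℤ)) ≤ 0 :=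
        mul_nonpos_of_nonneg_of_nonpos (by positivity) hle
      have := Int.natCast_nonneg j
      linarith
    · have hge : 1 ≤ (s 0 : ℤ) - (s 2 : ℤ) := hgt
      have hq : (2*(n:ℤ)+3) * 1 ≤ (2*(n:ℤ)+3) * ((s 0 : ℤ) - (s 2 : ℤ)) :=
        mul_le_mul_of_nonneg_left hge (by positivity)
      linarith
  -- conclude
  have hv0 : v 0 = 0 := by rw [hA, hAz, mul_zero]
  have hv1 : v 1 = 0 := by
    have := Eq1
    rw [hAz, zero_mul, zero_add] at this
    rcases mul_eq_zero.mp this with h | h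
    · exfalso
      have : ((2*n+2 : ℕ) : MvPolynomial (Fin 3) ℂ) = 0 := by push_cast; linear_combination h
      rw [natCast_C] at this
      have h9 := congrArg (coeff 0) this
      rw [coeff_C, if_pos rfl, coeff_zero] at h9
      have h10 : (2*n+2 : ℕ) = 0 := by exact_mod_cast h9
      omega
    · exact h
  have hv2 : v 2 = 0 := by
    have := Eq2
    rw [hAz, mul_zero, zero_mul, zero_add] at this
    rcases mul_eq_zero.mp this with h | h
    · exfalso
      have : ((n+1 : ℕ) : MvPolynomial (Fin 3) ℂ) = 0 := by push_cast; linear_combination h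
      rw [natCast_C] at this
      have h9 := congrArg (coeff 0) this
      rw [coeff_C, if_pos rfl, coeff_zero] at h9
      have h10 : (n+1 : ℕ) = 0 := by exact_mod_cast h9
      omega
    · exact h
  funext i
  fin_cases i
  · exact hv0
  · exact hv1
  · exact hv2
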